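/- Let C = η₀A₀ ⊕ η₁A₁ ⊕ η₂A₂ be a skew (σ, δ)-constacyclic code of length n over R = F_{p^m}[v]/⟨v^3 - v⟩, where A_i is generated by the monic right divisor f_i(x) of x^n - λ_i in F_{p^m}[x;Θ]. Then C is generated as a left module by f(x) = η₀f₀(x) + η₁f₁(x) + η₂f₂(x), and f(x) is a right divisor of x^n - δ in R[x;σ]. -/

import Mathlib

open Polynomial

set_option synthInstance.maxHeartbeats 1000000
set_option maxHeartbeats 1000000

noncomputable section

/-- The ring `R = F[v]/⟨v^3 - v⟩`. -/
abbrev Rq (F : Type) [Field F] : Type :=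
  Polynomial F ⧸ Ideal.span {(X : Polynomial F) ^ 3 - X}

/-- The image of `v` in `R`. -/
def vR (F : Type) [Field F] : Rq F := Ideal.Quotient.mk _ X

/-- The orthogonal idempotents `η₀ = 1 - v²`, `η₁ = ζ(v² + v)`, `η₂ = ζ(v² - v)`
with `ζ = 2⁻¹`. -/
def eta (F : Type) [Field F] : Fin 3 → Rq F :=
  ![1 - vR F ^ 2,
    algebraMap F (Rq F) (2 : F)⁻¹ * (vR F ^ 2 + vR F),
    algebraMap F (Rq F) (2 : F)⁻¹ * (vR F ^ 2 - vR F)]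

/-- Multiplication in the skew polynomial ring `S[x;σ]`, where polynomials are
represented as finitely supported coefficient functions `ℕ →₀ S` and
`(a x^i) (b x^j) = a σ^i(b) x^{i+j}`. -/
noncomputable def skewMul {S : Type} [Ring S] (σ : RingAut S) (f g : ℕ →₀ S) : ℕ →₀ S :=
  f.sum fun i a => g.sum fun j b => Finsupp.single (i + j) (a * (σ ^ i) b)

/-- A code `C` of length `n` over `S` is skew `(σ, δ)`-constacyclic if it is closed
under the shift `(c₀, …, c_{n-1}) ↦ (σ(δ c_{n-1}), σ(c₀), …, σ(c_{n-2}))`. -/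
def IsSkewConstacyclic {S : Type} [CommRing S] {n : ℕ} [NeZero n]
    (σ : RingAut S) (δ : S) (C : Set (Fin n → S)) : Prop :=
  ∀ c ∈ C, (fun i : Fin n => σ ((if i = 0 then δ else 1) * c (i - 1))) ∈ C

/-- The Euclidean dual of a code, with respect to the standard bilinear form. -/
def dualSet {ι S : Type} [Fintype ι] [CommRing S] (C : Set (ι → S)) : Set (ι → S) :=
  {a | ∀ b ∈ C, ∑ t, a t * b t = 0}

/-- The polynomial (coefficient vector) associated to a codeword. -/
noncomputable def toPoly {S : Type} [Semiring S] {n : ℕ} (c : Fin n → S) : ℕ →₀ S :=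
  ∑ i : Fin n, Finsupp.single (i : ℕ) (c i)

/-- A polynomial is monic: it has a coefficient equal to `1` beyond which all
coefficients vanish. -/
def IsMonicPoly {S : Type} [Semiring S] (g : ℕ →₀ S) : Prop :=
  ∃ d, g d = 1 ∧ ∀ j, d < j → g j = 0

/-- The skew reciprocal polynomial `h*(x) = Σ_{j=0}^k Θ^j(h_{k-j}) x^j` of a
polynomial `h` of degree (at most) `k`. -/
noncomputable def skewRecip {S : Type} [Ring S] (Θ : RingAut S) (k : ℕ) (h : ℕ →₀ S) :
    ℕ →₀ S :=
  ∑ j ∈ Finset.range (k + 1), Finsupp.single j ((Θ ^ j) (h (k - j)))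

/-- Coefficientwise embedding of polynomials over `F` into polynomials over `R`. -/
def liftPoly (F : Type) [Field F] (g : ℕ →₀ F) : ℕ →₀ Rq F :=
  Finsupp.mapRange (algebraMap F (Rq F)) (map_zero _) g


section Aux

lemma ringAutPow_fix {S : Type} [Ring S] (σ : RingAut S) (r : S) (hr : σ r = r) (i : ℕ) :
    (σ ^ i) r = r := by
  induction i with
  | zero => rfl
  | succ k ih => rw [pow_succ]; show (σ ^ k) (σ r) = r; rw [hr, ih]

lemma mapRange_finsupp_sum {ι A S T : Type} [AddCommMonoid A] [Ring S] [Ring T]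
    (φ : S →+* T) (f : ι →₀ A) (h : ι → A → (ℕ →₀ S)) :
    Finsupp.mapRange φ (map_zero φ) (f.sum h) =
      f.sum fun i a => Finsupp.mapRange φ (map_zero φ) (h i a) :=
  map_finsuppSum (Finsupp.mapRange.addMonoidHom φ.toAddMonoidHom) f h

lemma skewMul_add_left {S : Type} [Ring S] (σ : RingAut S) (f f' g : ℕ →₀ S) :
    skewMul σ (f + f') g = skewMul σ f g + skewMul σ f' g := by
  unfold skewMul
  rw [Finsupp.sum_add_index']
  · intro i
    simp
  · intro i a a'
    rw [← Finsupp.sum_add]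
    refine Finsupp.sum_congr fun j _ => ?_
    rw [add_mul, Finsupp.single_add]

lemma skewMul_add_right {S : Type} [Ring S] (σ : RingAut S) (f g g' : ℕ →₀ S) :
    skewMul σ f (g + g') = skewMul σ f g + skewMul σ f g' := by
  unfold skewMul
  rw [← Finsupp.sum_add]
  refine Finsupp.sum_congr fun i _ => ?_
  rw [Finsupp.sum_add_index']
  · intro j; simp
  · intro j b b'; rw [map_add, mul_add, Finsupp.single_add]

lemma skewMul_smul_left {S : Type} [CommRing S] (σ : RingAut S) (r : S) (f g : ℕ →₀ S) :
    skewMul σ (r • f) g = r • skewMul σ f g := by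
  unfold skewMul
  rw [Finsupp.sum_smul_index', Finsupp.smul_sum]
  · refine Finsupp.sum_congr fun i _ => ?_
    rw [Finsupp.smul_sum]
    refine Finsupp.sum_congr fun j _ => ?_
    rw [Finsupp.smul_single, smul_eq_mul, smul_eq_mul, mul_assoc]
  · intro i; simp

lemma skewMul_smul_right {S : Type} [CommRing S] (σ : RingAut S) (r : S) (hr : σ r = r)
    (f g : ℕ →₀ S) : skewMul σ f (r • g) = r • skewMul σ f g := by
  unfold skewMul
  rw [Finsupp.smul_sum]
  refine Finsupp.sum_congr fun i _ => ?_
  rw [Finsupp.sum_smul_index', Finsupp.smul_sum]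
  · refine Finsupp.sum_congr fun j _ => ?_
    rw [Finsupp.smul_single, smul_eq_mul, smul_eq_mul, map_mul,
      ringAutPow_fix σ r hr i]
    ring_nf
  · intro j; simp

lemma skewMul_mapRange {S T : Type} [Ring S] [Ring T] (φ : S →+* T)
    (σ : RingAut S) (τ : RingAut T) (hcomm : ∀ s, φ (σ s) = τ (φ s)) (f g : ℕ →₀ S) :
    Finsupp.mapRange φ (map_zero φ) (skewMul σ f g) =
      skewMul τ (Finsupp.mapRange φ (map_zero φ) f) (Finsupp.mapRange φ (map_zero φ) g) := by
  have hcomm' : ∀ (i : ℕ) (s : S), φ ((σ ^ i) s) = (τ ^ i) (φ s) := by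
    intro i
    induction i with
    | zero => intro s; rfl
    | succ k ih => intro s; rw [pow_succ, pow_succ]
                   show φ ((σ^k) (σ s)) = (τ^k) (τ (φ s)); rw [← hcomm, ih]
  unfold skewMul
  rw [Finsupp.sum_mapRange_index, mapRange_finsupp_sum]
  · refine Finsupp.sum_congr fun i _ => ?_
    rw [Finsupp.sum_mapRange_index, mapRange_finsupp_sum]
    · refine Finsupp.sum_congr fun j _ => ?_
      rw [Finsupp.mapRange_single, map_mul, hcomm']
    · intro j; simp
  · intro i; simp

lemma mapRange_toPoly {S T : Type} [Ring S] [Ring T] (φ : S →+* T) {n : ℕ} (c : Fin n → S) :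
    Finsupp.mapRange φ (map_zero φ) (toPoly c) = toPoly (fun t => φ (c t)) := by
  unfold toPoly
  rw [show (Finsupp.mapRange (⇑φ) (map_zero φ) : (ℕ →₀ S) → (ℕ →₀ T)) =
    ⇑(Finsupp.mapRange.addMonoidHom φ.toAddMonoidHom) from rfl, map_sum]
  refine Finset.sum_congr rfl fun t _ => ?_
  show Finsupp.mapRange (⇑φ) (map_zero φ) _ = _
  rw [Finsupp.mapRange_single]

lemma smul_toPoly {S : Type} [CommRing S] {n : ℕ} (r : S) (c : Fin n → S) :
    r • toPoly c = toPoly (fun t => r * c t) := by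
  unfold toPoly
  rw [Finset.smul_sum]
  refine Finset.sum_congr rfl fun t _ => ?_
  rw [Finsupp.smul_single, smul_eq_mul]

lemma toPoly_add {S : Type} [Ring S] {n : ℕ} (c d : Fin n → S) :
    toPoly (fun t => c t + d t) = toPoly c + toPoly d := by
  unfold toPoly
  rw [← Finset.sum_add_distrib]
  refine Finset.sum_congr rfl fun t _ => ?_
  rw [Finsupp.single_add]

lemma mapRange_smul' {S T : Type} [CommRing S] [CommRing T] (φ : S →+* T) (r : S)
    (g : ℕ →₀ S) : Finsupp.mapRange φ (map_zero φ) (r • g) =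
      φ r • Finsupp.mapRange φ (map_zero φ) g := by
  ext k
  simp [Finsupp.mapRange_apply]

lemma mapRange_sub' {S T : Type} [Ring S] [Ring T] (φ : S →+* T) (g h : ℕ →₀ S) :
    Finsupp.mapRange φ (map_zero φ) (g - h) =
      Finsupp.mapRange φ (map_zero φ) g - Finsupp.mapRange φ (map_zero φ) h := by
  ext k
  simp [Finsupp.mapRange_apply]

variable (F : Type) [Field F]

lemma eta_zero : _root_.eta F 0 = 1 - vR F ^ 2 := rfl
lemma eta_one : _root_.eta F 1 = algebraMap F (Rq F) (2 : F)⁻¹ * (vR F ^ 2 + vR F) := rfl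
lemma eta_two : _root_.eta F 2 = algebraMap F (Rq F) (2 : F)⁻¹ * (vR F ^ 2 - vR F) := rfl

lemma vR_cube : vR F ^ 3 = vR F := by
  have h : (Ideal.Quotient.mk (Ideal.span {(X : Polynomial F) ^ 3 - X}))
      ((X : Polynomial F) ^ 3 - X) = 0 :=
    Ideal.Quotient.eq_zero_iff_mem.mpr (Ideal.subset_span rfl)
  rw [map_sub, map_pow] at h
  rw [sub_eq_zero] at h
  exact h

lemma two_inv_mul (h2 : (2 : F) ≠ 0) :
    algebraMap F (Rq F) (2 : F)⁻¹ * 2 = 1 := by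
  have : ((2 : Rq F)) = algebraMap F (Rq F) (2 : F) := by rw [map_ofNat]
  rw [this, ← map_mul, inv_mul_cancel₀ h2, map_one]

lemma eta_sum (h2 : (2 : F) ≠ 0) :
    _root_.eta F 0 + _root_.eta F 1 + _root_.eta F 2 = 1 := by
  have hz := two_inv_mul F h2
  rw [eta_zero, eta_one, eta_two]
  linear_combination (vR F ^ 2) * hz

lemma eta_mul (h2 : (2 : F) ≠ 0) (i j : Fin 3) :
    _root_.eta F i * _root_.eta F j = if i = j then _root_.eta F i else 0 := by
  have hw := vR_cube F
  have hz := two_inv_mul F h2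
  set w := vR F with hwdef
  set z := algebraMap F (Rq F) (2 : F)⁻¹ with hzdef
  fin_cases i <;> fin_cases j <;>
    simp only [Fin.zero_eta, Fin.mk_one, Fin.reduceEq, if_true, if_false, reduceIte,
      show (⟨2, by norm_num⟩ : Fin 3) = 2 from rfl, eta_zero, eta_one, eta_two,
      ← hwdef, ← hzdef]
  · linear_combination w * hw
  · linear_combination (z * (-w - 1)) * hw
  · linear_combination (z * (1 - w)) * hw
  · linear_combination (z * (-w - 1)) * hw
  · linear_combination (z ^ 2 * w + 2 * z ^ 2) * hw + (z * (w ^ 2 + w)) * hz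
  · linear_combination (z ^ 2 * w) * hw
  · linear_combination (z * (1 - w)) * hw
  · linear_combination (z ^ 2 * w) * hw
  · linear_combination (z ^ 2 * w - 2 * z ^ 2) * hw + (z * (w ^ 2 - w)) * hz

def rt (F : Type) [Field F] : Fin 3 → F := ![0, 1, -1]

lemma rt_cube (i : Fin 3) : rt F i ^ 3 = rt F i := by
  fin_cases i <;> norm_num [rt]

def piQ (i : Fin 3) : Rq F →+* F :=
  Ideal.Quotient.lift _ (evalRingHom (rt F i)) (by
    intro a ha
    obtain ⟨c, rfl⟩ := Ideal.mem_span_singleton'.mp ha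
    simp [rt_cube F i])

lemma piQ_mk (i : Fin 3) (g : Polynomial F) :
    piQ F i (Ideal.Quotient.mk _ g) = eval (rt F i) g := rfl

lemma algebraMap_eq_mk_C (a : F) :
    algebraMap F (Rq F) a = Ideal.Quotient.mk _ (C a) := rfl

lemma piQ_alg (i : Fin 3) (a : F) : piQ F i (algebraMap F (Rq F) a) = a := by
  rw [algebraMap_eq_mk_C, piQ_mk, eval_C]

lemma piQ_v (i : Fin 3) : piQ F i (vR F) = rt F i := by
  rw [vR, piQ_mk, eval_X]

lemma piQ_eta (h2 : (2 : F) ≠ 0) (i j : Fin 3) :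
    piQ F i (_root_.eta F j) = if i = j then 1 else 0 := by
  fin_cases i <;> fin_cases j <;>
    simp only [Fin.zero_eta, Fin.mk_one, Fin.reduceEq, if_true, if_false, reduceIte,
      show (⟨2, by norm_num⟩ : Fin 3) = 2 from rfl, eta_zero, eta_one, eta_two] <;>
    simp only [map_mul, map_add, map_sub, map_one, map_pow, piQ_alg, piQ_v]
  all_goals norm_num [rt, Matrix.cons_val_two, Matrix.tail_cons, Matrix.head_cons]
  all_goals field_simp

lemma eta_mul_X_sub (i : Fin 3) :
    _root_.eta F i * (vR F - algebraMap F (Rq F) (rt F i)) = 0 := by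
  have hw := vR_cube F
  fin_cases i <;>
    simp only [Fin.zero_eta, Fin.mk_one, show (⟨2, by norm_num⟩ : Fin 3) = 2 from rfl,
      eta_zero, eta_one, eta_two, rt, Matrix.cons_val_zero, Matrix.cons_val_one,
      Matrix.head_cons, map_zero, map_one, map_neg, Matrix.cons_val_two, Matrix.tail_cons]
  · linear_combination -hw
  · linear_combination (algebraMap F (Rq F) (2:F)⁻¹) * hw
  · linear_combination (algebraMap F (Rq F) (2:F)⁻¹) * hw

lemma eta_mul_eq (i : Fin 3) (r : Rq F) :
    _root_.eta F i * r = _root_.eta F i * algebraMap F (Rq F) (piQ F i r) := by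
  obtain ⟨g, rfl⟩ := Ideal.Quotient.mk_surjective r
  rw [piQ_mk, algebraMap_eq_mk_C, ← sub_eq_zero, ← mul_sub, ← map_sub]
  obtain ⟨q, hq⟩ := Polynomial.X_sub_C_dvd_sub_C_eval (a := rt F i) (p := g)
  rw [hq, map_mul, ← mul_assoc]
  have : (Ideal.Quotient.mk (Ideal.span {(X : Polynomial F) ^ 3 - X})) (X - C (rt F i)) =
      vR F - algebraMap F (Rq F) (rt F i) := by
    rw [map_sub, algebraMap_eq_mk_C, vR]
  rw [this, eta_mul_X_sub, zero_mul]

lemma two_ne_zero_of_card {p m : ℕ} (hp : p.Prime) (hodd : Odd p) (hm : 0 < m)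
    [Fintype F] (hF : Fintype.card F = p ^ m) : (2 : F) ≠ 0 := by
  intro h20
  have hchar : CharP F (ringChar F) := ringChar.charP F
  have hq : (ringChar F).Prime := CharP.char_is_prime F (ringChar F)
  obtain ⟨k, hk⟩ := FiniteField.card F (ringChar F)
  have hdvd : ringChar F ∣ 2 := (CharP.cast_eq_zero_iff F (ringChar F) 2).mp (by exact_mod_cast h20)
  have hq2 : ringChar F = 2 := (Nat.prime_dvd_prime_iff_eq hq Nat.prime_two).mp hdvd
  have hpq : p = 2 := by
    have hdp : p ∣ Fintype.card F := hF ▸ dvd_pow_self p hm.ne'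
    rw [hk.2, hq2] at hdp
    have : p ∣ 2 := hp.dvd_of_dvd_pow hdp
    exact (Nat.prime_dvd_prime_iff_eq hp Nat.prime_two).mp this
  rw [hpq] at hodd
  exact (by norm_num : ¬ Odd 2) hodd

lemma theta_rt (Θ : RingAut F) (i : Fin 3) : Θ (rt F i) = rt F i := by
  fin_cases i <;> simp [rt]

lemma sigma_alg (Θ : RingAut F) (σ : RingAut (Rq F))
    (hσ : ∀ a b c : F,
      σ (algebraMap F (Rq F) a + algebraMap F (Rq F) b * vR F +
          algebraMap F (Rq F) c * vR F ^ 2) =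
        algebraMap F (Rq F) (Θ a) + algebraMap F (Rq F) (Θ b) * vR F +
          algebraMap F (Rq F) (Θ c) * vR F ^ 2) (a : F) :
    σ (algebraMap F (Rq F) a) = algebraMap F (Rq F) (Θ a) := by
  have := hσ a 0 0
  simpa using this

lemma sigma_v (Θ : RingAut F) (σ : RingAut (Rq F))
    (hσ : ∀ a b c : F,
      σ (algebraMap F (Rq F) a + algebraMap F (Rq F) b * vR F +
          algebraMap F (Rq F) c * vR F ^ 2) =
        algebraMap F (Rq F) (Θ a) + algebraMap F (Rq F) (Θ b) * vR F +
          algebraMap F (Rq F) (Θ c) * vR F ^ 2) :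
    σ (vR F) = vR F := by
  have := hσ 0 1 0
  simpa using this

variable (Θ : RingAut F) (σ : RingAut (Rq F))
variable (hσ : ∀ a b c : F,
      σ (algebraMap F (Rq F) a + algebraMap F (Rq F) b * vR F +
          algebraMap F (Rq F) c * vR F ^ 2) =
        algebraMap F (Rq F) (Θ a) + algebraMap F (Rq F) (Θ b) * vR F +
          algebraMap F (Rq F) (Θ c) * vR F ^ 2)

include hσ

lemma sigma_eta (i : Fin 3) : σ (_root_.eta F i) = _root_.eta F i := by
  have hv := sigma_v F Θ σ hσ
  have ha := sigma_alg F Θ σ hσ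
  have hinv : Θ (2 : F)⁻¹ = (2 : F)⁻¹ := by
    rw [map_inv₀, map_ofNat]
  fin_cases i <;>
    simp only [Fin.zero_eta, Fin.mk_one, show (⟨2, by norm_num⟩ : Fin 3) = 2 from rfl,
      eta_zero, eta_one, eta_two, map_sub, map_add, map_mul, map_one, map_pow, hv, ha, hinv]

lemma piQ_sigma (i : Fin 3) (r : Rq F) : piQ F i (σ r) = Θ (piQ F i r) := by
  obtain ⟨g, rfl⟩ := Ideal.Quotient.mk_surjective r
  have key : ((piQ F i).comp ((σ : Rq F →+* Rq F))).comp
        (Ideal.Quotient.mk (Ideal.span {(X : Polynomial F) ^ 3 - X})) =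
      ((Θ : F →+* F).comp (piQ F i)).comp
        (Ideal.Quotient.mk (Ideal.span {(X : Polynomial F) ^ 3 - X})) := by
    apply Polynomial.ringHom_ext
    · intro a
      simp only [RingHom.comp_apply, RingHom.coe_coe, ← algebraMap_eq_mk_C,
        sigma_alg F Θ σ hσ, piQ_alg]
    · simp only [RingHom.comp_apply, RingHom.coe_coe]
      show piQ F i (σ (vR F)) = Θ (piQ F i (vR F))
      rw [sigma_v F Θ σ hσ, piQ_v, theta_rt]
  exact RingHom.congr_fun key g


end Aux

lemma mapRange_add' {S T : Type} [Ring S] [Ring T] (φ : S →+* T) (g h : ℕ →₀ S) :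
    Finsupp.mapRange φ (map_zero φ) (g + h) =
      Finsupp.mapRange φ (map_zero φ) g + Finsupp.mapRange φ (map_zero φ) h := by
  ext k
  simp [Finsupp.mapRange_apply]

lemma mapRange_lift {F : Type} [Field F] (i : Fin 3) (g : ℕ →₀ F) :
    Finsupp.mapRange (piQ F i) (map_zero (piQ F i)) (liftPoly F g) = g := by
  ext k
  simp [Finsupp.mapRange_apply, liftPoly, piQ_alg]

lemma toPoly_eta_sum {F : Type} [Field F] {n : ℕ} (y : Fin 3 → Fin n → F) :
    toPoly (fun t => ∑ j, _root_.eta F j * algebraMap F (Rq F) (y j t)) =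
      ∑ j, _root_.eta F j • liftPoly F (toPoly (y j)) := by
  have hl : ∀ j, liftPoly F (toPoly (y j)) = toPoly (fun t => algebraMap F (Rq F) (y j t)) :=
    fun j => mapRange_toPoly (algebraMap F (Rq F)) (y j)
  simp only [Fin.sum_univ_three, hl, smul_toPoly]
  rw [show (fun t => _root_.eta F 0 * algebraMap F (Rq F) (y 0 t) +
        _root_.eta F 1 * algebraMap F (Rq F) (y 1 t) +
        _root_.eta F 2 * algebraMap F (Rq F) (y 2 t)) = fun t =>
      ((_root_.eta F 0 * algebraMap F (Rq F) (y 0 t) +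
        _root_.eta F 1 * algebraMap F (Rq F) (y 1 t)) +
        _root_.eta F 2 * algebraMap F (Rq F) (y 2 t)) from rfl,
    toPoly_add, toPoly_add]



theorem stmt12 (p m n : ℕ) (hp : p.Prime) (hodd : Odd p) (hm : 0 < m) [NeZero n]
    (F : Type) [Field F] [Fintype F] (hF : Fintype.card F = p ^ m)
    (Θ : RingAut F) (σ : RingAut (Rq F))
    (hσ : ∀ a b c : F,
      σ (algebraMap F (Rq F) a + algebraMap F (Rq F) b * vR F +
          algebraMap F (Rq F) c * vR F ^ 2) =
        algebraMap F (Rq F) (Θ a) + algebraMap F (Rq F) (Θ b) * vR F +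
          algebraMap F (Rq F) (Θ c) * vR F ^ 2)
    (lam : Fin 3 → F) (δ : Rq F)
    (hδ : δ = ∑ i, algebraMap F (Rq F) (lam i) * eta F i)
    (hδu : IsUnit δ) (hfix : σ δ = δ) (hord : orderOf σ ∣ n)
    (f : Fin 3 → (ℕ →₀ F)) (hmon : ∀ i, IsMonicPoly (f i))
    (hdiv : ∀ i, ∃ h, skewMul Θ h (f i) =
        Finsupp.single n 1 - Finsupp.single 0 (lam i))
    (A : Fin 3 → Submodule F (Fin n → F))
    (hA : ∀ i, ∀ c : Fin n → F, c ∈ A i ↔ ∃ q, toPoly c = skewMul Θ q (f i))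
    (C : Submodule (Rq F) (Fin n → Rq F))
    (hC : ∀ c, c ∈ C ↔ ∃ y : Fin 3 → Fin n → F, (∀ i, y i ∈ A i) ∧
        c = fun t => ∑ j, eta F j * algebraMap F (Rq F) (y j t))
    (hconst : IsSkewConstacyclic σ δ (C : Set (Fin n → Rq F))) :
    (∀ c : Fin n → Rq F, c ∈ C ↔
        ∃ q : ℕ →₀ Rq F, toPoly c = skewMul σ q (∑ i, eta F i • liftPoly F (f i))) ∧
      ∃ h : ℕ →₀ Rq F, skewMul σ h (∑ i, eta F i • liftPoly F (f i)) =
        Finsupp.single n 1 - Finsupp.single 0 δ := by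
  classical
  have h2 : (2 : F) ≠ 0 := two_ne_zero_of_card F hp hodd hm hF
  have hse : ∀ i, σ (_root_.eta F i) = _root_.eta F i := sigma_eta F Θ σ hσ
  have hLmul : ∀ q g : ℕ →₀ F, liftPoly F (skewMul Θ q g) =
      skewMul σ (liftPoly F q) (liftPoly F g) := fun q g =>
    skewMul_mapRange (algebraMap F (Rq F)) Θ σ (fun s => (sigma_alg F Θ σ hσ s).symm) q g
  set fhat := ∑ i, _root_.eta F i • liftPoly F (f i) with hfhat
  have hfhat3 : fhat = _root_.eta F 0 • liftPoly F (f 0) + _root_.eta F 1 • liftPoly F (f 1)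
      + _root_.eta F 2 • liftPoly F (f 2) := by rw [hfhat, Fin.sum_univ_three]
  have term : ∀ (u : ℕ →₀ F) (j i : Fin 3),
      skewMul σ (_root_.eta F j • liftPoly F u) (_root_.eta F i • liftPoly F (f i)) =
        (_root_.eta F j * _root_.eta F i) • skewMul σ (liftPoly F u) (liftPoly F (f i)) := by
    intro u j i
    rw [skewMul_smul_left, skewMul_smul_right σ _ (hse i)]
    ext k
    simp only [Finsupp.smul_apply, smul_eq_mul, mul_assoc]
  have key : ∀ q : Fin 3 → (ℕ →₀ F),
      skewMul σ (∑ j, _root_.eta F j • liftPoly F (q j)) fhat =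
        ∑ j, _root_.eta F j • liftPoly F (skewMul Θ (q j) (f j)) := by
    intro q
    rw [Fin.sum_univ_three, Fin.sum_univ_three, hfhat3]
    rw [skewMul_add_left, skewMul_add_left, skewMul_add_right, skewMul_add_right,
      skewMul_add_right, skewMul_add_right, skewMul_add_right, skewMul_add_right]
    simp only [term, eta_mul F h2, Fin.reduceEq, reduceIte, zero_smul, add_zero,
      zero_add, hLmul]
    have z3 : ∀ g : ℕ →₀ Rq F, (0 : Rq F) • g = 0 := by
      intro g; ext k; simp
    simp only [z3, add_zero, zero_add]
  constructor
  · intro c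
    constructor
    · intro hc
      obtain ⟨y, hy, rfl⟩ := (hC _).mp hc
      choose q hq using fun j => (hA j (y j)).mp (hy j)
      refine ⟨∑ j, _root_.eta F j • liftPoly F (q j), ?_⟩
      rw [key q, toPoly_eta_sum (F := F) y]
      try simp
      simp only [hq]
    · rintro ⟨Q, hQ⟩
      apply (hC c).mpr
      refine ⟨fun i t => piQ F i (c t), fun i => ?_, ?_⟩
      · apply (hA i _).mpr
        refine ⟨Finsupp.mapRange (piQ F i) (map_zero _) Q, ?_⟩
        have h1 := congrArg (Finsupp.mapRange (piQ F i) (map_zero (piQ F i))) hQ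
        rw [mapRange_toPoly, skewMul_mapRange (piQ F i) σ Θ (piQ_sigma F Θ σ hσ i)] at h1
        have hfh : Finsupp.mapRange (piQ F i) (map_zero (piQ F i)) fhat = f i := by
          rw [hfhat3]
          rw [mapRange_add', mapRange_add', mapRange_smul', mapRange_smul', mapRange_smul',
            mapRange_lift (F := F) i, mapRange_lift (F := F) i, mapRange_lift (F := F) i]
          simp only [piQ_eta F h2]
          fin_cases i <;>
            simp only [Fin.zero_eta, Fin.mk_one, show (⟨2, by norm_num⟩ : Fin 3) = 2 from rfl,
              Fin.reduceEq, reduceIte, one_smul, zero_smul, add_zero, zero_add]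
        rw [hfh] at h1
        exact h1
      · funext t
        rw [Fin.sum_univ_three]
        show c t = _root_.eta F 0 * algebraMap F (Rq F) (piQ F 0 (c t)) +
          _root_.eta F 1 * algebraMap F (Rq F) (piQ F 1 (c t)) +
          _root_.eta F 2 * algebraMap F (Rq F) (piQ F 2 (c t))
        rw [← eta_mul_eq F 0 (c t), ← eta_mul_eq F 1 (c t), ← eta_mul_eq F 2 (c t)]
        rw [← add_mul, ← add_mul, eta_sum F h2, one_mul]
  · choose hh hhq using hdiv
    refine ⟨∑ i, _root_.eta F i • liftPoly F (hh i), ?_⟩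
    rw [key hh]
    simp only [hhq]
    have hl : ∀ i, liftPoly F (Finsupp.single n 1 - Finsupp.single 0 (lam i)) =
        Finsupp.single n (1 : Rq F) - Finsupp.single 0 (algebraMap F (Rq F) (lam i)) := by
      intro i
      show Finsupp.mapRange _ _ _ = _
      rw [mapRange_sub', Finsupp.mapRange_single, Finsupp.mapRange_single, map_one]
    have step : ∀ r a : Rq F,
        r • (Finsupp.single n (1 : Rq F) - Finsupp.single 0 a) =
          Finsupp.single n r - Finsupp.single 0 (r * a) := by
      intro r a
      ext k
      simp only [Finsupp.smul_apply, Finsupp.sub_apply, Finsupp.single_apply, smul_eq_mul]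
      split_ifs <;> ring
    rw [Fin.sum_univ_three, hl 0, hl 1, hl 2, step, step, step]
    have e1 : (Finsupp.single n (1 : Rq F)) = Finsupp.single n (_root_.eta F 0) +
        Finsupp.single n (_root_.eta F 1) + Finsupp.single n (_root_.eta F 2) := by
      rw [← Finsupp.single_add, ← Finsupp.single_add, eta_sum F h2]
    have e2 : (Finsupp.single 0 δ) =
        Finsupp.single 0 (_root_.eta F 0 * algebraMap F (Rq F) (lam 0)) +
        Finsupp.single 0 (_root_.eta F 1 * algebraMap F (Rq F) (lam 1)) +
        Finsupp.single 0 (_root_.eta F 2 * algebraMap F (Rq F) (lam 2)) := by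
      rw [← Finsupp.single_add, ← Finsupp.single_add]
      congr 1
      rw [hδ, Fin.sum_univ_three]
      ring
    rw [e1, e2]
    abel
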